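/- If (a_1, ..., a_{i-1}, 1, a_{i+1}, ..., a_n) is the quiddity sequence of a closed integral frieze pattern of order n ≥ 5 with the entry at position i equal to 1, then (a_1, ..., a_{i-1} - 1, a_{i+1} - 1, ..., a_n) (removing the 1 and decreasing both cyclic neighbors by 1) is the quiddity sequence of a closed integral frieze pattern of order n-1. -/

import Mathlib

/-- A closed integral frieze pattern of order `n`, encoded as a function on pairs of
integer indices, supported on the band `i ≤ j ≤ i + n`, with bounding rows of 0s and 1s,
positive integer entries in the interior, and the unimodular diamond rule. -/
def IsClosedFrieze (n : ℕ) (a : ℤ → ℤ → ℤ) : Prop :=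
  (∀ i : ℤ, a i i = 0) ∧
  (∀ i : ℤ, a i (i + 1) = 1) ∧
  (∀ i : ℤ, a i (i + n - 1) = 1) ∧
  (∀ i : ℤ, a i (i + n) = 0) ∧
  (∀ i j : ℤ, i + 2 ≤ j → j ≤ i + n - 2 → 0 < a i j) ∧
  (∀ i j : ℤ, i + 1 ≤ j → j ≤ i + n - 1 →
    a i j * a (i + 1) (j + 1) - a i (j + 1) * a (i + 1) j = 1) ∧
  (∀ i j : ℤ, j < i → a i j = 0) ∧
  (∀ i j : ℤ, i + n < j → a i j = 0)


private lemma not_mul_btw {N d x : ℤ} (hN : 0 < N) (h : N * d = x) (h1 : 1 ≤ x)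
    (h2 : x < N) : False := by
  rcases le_or_gt d 0 with hd | hd
  · nlinarith
  · nlinarith

private lemma per_all {f : ℤ → ℤ} {T : ℤ} (h : ∀ j, f (j + T) = f j) :
    ∀ t j : ℤ, f (j + T * t) = f j := by
  intro t
  induction t using Int.induction_on with
  | zero => intro j; simp
  | succ k ih =>
      intro j
      have h1 := h (j + T * (k : ℤ))
      rw [show j + T * ((k : ℤ) + 1) = j + T * (k : ℤ) + T from by ring, h1]
      exact ih j
  | pred k ih =>
      intro j
      have h1 := h (j + T * (-(k : ℤ) - 1))
      rw [show j + T * (-(k : ℤ) - 1) + T = j + T * (-(k : ℤ)) from by ring] at h1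
      rw [← h1]
      exact ih j

private lemma frieze_pos {n : ℕ} {a : ℤ → ℤ → ℤ} (hF : IsClosedFrieze n a) {p r : ℤ}
    (h1 : p + 1 ≤ r) (h2 : r ≤ p + n - 1) : 0 < a p r := by
  obtain ⟨f0, f1, flast, f4, fpos, fdia, flow, fhigh⟩ := hF
  rcases eq_or_lt_of_le h1 with h | h
  · rw [← h, f1]; exact one_pos
  · rcases eq_or_lt_of_le h2 with h' | h'
    · rw [h', flast]; exact one_pos
    · exact fpos p r (by omega) (by omega)

/-- three-term recurrence along rows (varying the row, fixed columns `j-1, j, j+1`). -/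
private lemma frieze_rec {n : ℕ} {a : ℤ → ℤ → ℤ} (hF : IsClosedFrieze n a) (j : ℤ) :
    ∀ p : ℤ, j + 1 - (n : ℤ) ≤ p → p ≤ j - 1 →
      a p (j + 1) + a p (j - 1) = a (j - 1) (j + 1) * a p j := by
  obtain ⟨f0, f1, flast, f4, fpos, fdia, flow, fhigh⟩ := id hF
  have key : ∀ d : ℕ, ∀ p : ℤ, p = j - 1 - (d : ℤ) → j + 1 - (n : ℤ) ≤ p →
      a p (j + 1) + a p (j - 1) = a (j - 1) (j + 1) * a p j := by
    intro d
    induction d with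
    | zero =>
        intro p hp _
        have hp' : p = j - 1 := by omega
        subst hp'
        have e1 : a (j - 1) j = 1 := by
          have h := f1 (j - 1); rw [show j - 1 + 1 = j from by ring] at h; exact h
        rw [f0, e1]; ring
    | succ d ih =>
        intro p hp hlow'
        have ihr := ih (p + 1) (by omega) (by omega)
        have D1 := fdia p (j - 1) (by omega) (by omega)
        rw [show j - 1 + 1 = j from by ring] at D1
        have D2 := fdia p j (by omega) (by omega)
        have hBpos : 0 < a (p + 1) j := frieze_pos hF (by omega) (by omega)
        have hz : a (p + 1) j *
            (a p (j + 1) + a p (j - 1) - a (j - 1) (j + 1) * a p j) = 0 := by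
          linear_combination a p j * ihr + D1 - D2
        have h0 := (mul_eq_zero.mp hz).resolve_left (ne_of_gt hBpos)
        linarith
  intro p hlow' hhigh'
  exact key (j - 1 - p).toNat p (by omega) hlow'

/-- three-term recurrence along columns (varying the column, fixed rows `p-1, p, p+1`). -/
private lemma frieze_rec' {n : ℕ} {a : ℤ → ℤ → ℤ} (hF : IsClosedFrieze n a) (p : ℤ) :
    ∀ r : ℤ, p + 1 ≤ r → r ≤ p + (n : ℤ) - 1 →
      a (p - 1) r + a (p + 1) r = a (p - 1) (p + 1) * a p r := by
  obtain ⟨f0, f1, flast, f4, fpos, fdia, flow, fhigh⟩ := id hF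
  have key : ∀ d : ℕ, ∀ r : ℤ, r = p + 1 + (d : ℤ) → r ≤ p + (n : ℤ) - 1 →
      a (p - 1) r + a (p + 1) r = a (p - 1) (p + 1) * a p r := by
    intro d
    induction d with
    | zero =>
        intro r hr _
        have hr' : r = p + 1 := by omega
        subst hr'
        rw [f0, f1]; ring
    | succ d ih =>
        intro r hr hhigh'
        have ihr := ih (r - 1) (by omega) (by omega)
        have D1 := fdia (p - 1) (r - 1) (by omega) (by omega)
        rw [show r - 1 + 1 = r from by ring, show p - 1 + 1 = p from by ring] at D1
        have D2 := fdia p (r - 1) (by omega) (by omega)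
        rw [show r - 1 + 1 = r from by ring] at D2
        have hBpos : 0 < a p (r - 1) := frieze_pos hF (by omega) (by omega)
        have hz : a p (r - 1) *
            (a (p - 1) r + a (p + 1) r - a (p - 1) (p + 1) * a p r) = 0 := by
          linear_combination a p r * ihr - D1 + D2
        have h0 := (mul_eq_zero.mp hz).resolve_left (ne_of_gt hBpos)
        linarith
  intro r h1' h2'
  exact key (r - (p + 1)).toNat r (by omega) h2'

/-- glide symmetry at the bottom row: `a p (p+n-2) = a (p+n-2) (p+n)`. -/
private lemma frieze_glide {n : ℕ} {a : ℤ → ℤ → ℤ} (hF : IsClosedFrieze n a) (hn : 2 ≤ n)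
    (p : ℤ) : a p (p + (n : ℤ) - 2) = a (p + (n : ℤ) - 2) (p + (n : ℤ)) := by
  have h := frieze_rec hF (p + (n : ℤ) - 1) p (by omega) (by omega)
  rw [show p + (n : ℤ) - 1 + 1 = p + (n : ℤ) from by ring,
      show p + (n : ℤ) - 1 - 1 = p + (n : ℤ) - 2 from by ring] at h
  obtain ⟨f0, f1, flast, f4, fpos, fdia, flow, fhigh⟩ := hF
  rw [f4, flast] at h
  linarith

private def phi (n : ℕ) (i k : ℤ) : ℤ :=
  i + 2 + (n : ℤ) * ((k - i - 2) / ((n : ℤ) - 1)) + (k - i - 2) % ((n : ℤ) - 1)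

private lemma phi_form {n : ℕ} (hn : 2 ≤ n) (i t r : ℤ) (h0 : 0 ≤ r) (h1 : r < (n : ℤ) - 1) :
    phi n i (i + 2 + ((n : ℤ) - 1) * t + r) = i + 2 + (n : ℤ) * t + r := by
  unfold phi
  have hne : ((n : ℤ) - 1) ≠ 0 := by omega
  rw [show i + 2 + ((n : ℤ) - 1) * t + r - i - 2 = r + t * ((n : ℤ) - 1) from by ring,
      Int.add_mul_ediv_right _ _ hne, Int.add_mul_emod_self_right,
      Int.ediv_eq_zero_of_lt h0 h1, Int.emod_eq_of_lt h0 h1]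
  ring

private lemma phi_rep {n : ℕ} (hn : 2 ≤ n) (i k : ℤ) :
    ∃ t r : ℤ, 0 ≤ r ∧ r < (n : ℤ) - 1 ∧ k = i + 2 + ((n : ℤ) - 1) * t + r := by
  refine ⟨(k - i - 2) / ((n : ℤ) - 1), (k - i - 2) % ((n : ℤ) - 1),
    Int.emod_nonneg _ (by omega), Int.emod_lt_of_pos _ (by omega), ?_⟩
  have h := Int.mul_ediv_add_emod (k - i - 2) ((n : ℤ) - 1)
  linarith

/-- `q : ℤ → ℤ` is the (n-periodic) quiddity sequence of a closed integral frieze of order `n`. -/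
def IsQuiddityZ (n : ℕ) (q : ℤ → ℤ) : Prop :=
  (∀ i : ℤ, q (i + n) = q i) ∧
  ∃ a : ℤ → ℤ → ℤ, IsClosedFrieze n a ∧ ∀ i : ℤ, a i (i + 2) = q i

/-- Cutting: removing an entry equal to 1 from a quiddity sequence of order `n ≥ 5` and
decreasing both cyclic neighbours by 1 yields a quiddity sequence of order `n - 1`. -/
theorem quiddity_cut (n : ℕ) (hn : 5 ≤ n) (q : ℤ → ℤ) (hq : IsQuiddityZ n q) (i : ℤ)
    (hi : q i = 1) (q' : ℤ → ℤ)
    (hper : ∀ j : ℤ, q' (j + (n - 1 : ℕ)) = q' j)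
    (h1 : q' (i + 1) = q (i + 1) - 1)
    (h2 : ∀ j : ℤ, i + 2 ≤ j → j ≤ i + n - 2 → q' j = q j)
    (h3 : q' (i + n - 1) = q (i + n - 1) - 1) :
    IsQuiddityZ (n - 1) q' := by
  obtain ⟨hqper, a, hF, hqa⟩ := hq
  obtain ⟨f0, f1, flast, f4, fpos, fdia, flow, fhigh⟩ := id hF
  have hn2 : 2 ≤ n := by omega
  have hcast : ((n - 1 : ℕ) : ℤ) = (n : ℤ) - 1 := by omega
  -- full periodicity of q and q'
  have hqp : ∀ t j : ℤ, q (j + (n : ℤ) * t) = q j := per_all hqper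
  have hper' : ∀ j : ℤ, q' (j + ((n : ℤ) - 1)) = q' j := by
    intro j; have h := hper j; rwa [hcast] at h
  have hq'p : ∀ t j : ℤ, q' (j + ((n : ℤ) - 1) * t) = q' j := per_all hper'
  -- properties of phi
  have hform := phi_form hn2 i
  have hrep := phi_rep hn2 i
  have hstep : ∀ k : ℤ, phi n i (k + 1) = phi n i k + 1 ∨
      (phi n i (k + 1) = phi n i k + 2 ∧ ∃ t : ℤ, phi n i k = i + (n : ℤ) * t) := by
    intro k
    obtain ⟨t, r, hr0, hr1, hk⟩ := hrep k
    subst hk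
    rcases lt_or_ge r ((n : ℤ) - 2) with h | h
    · left
      rw [show i + 2 + ((n : ℤ) - 1) * t + r + 1 = i + 2 + ((n : ℤ) - 1) * t + (r + 1) from
          by ring, hform t (r + 1) (by omega) (by omega), hform t r hr0 hr1]
      ring
    · right
      have hr : r = (n : ℤ) - 2 := by omega
      subst hr
      constructor
      · rw [show i + 2 + ((n : ℤ) - 1) * t + ((n : ℤ) - 2) + 1
            = i + 2 + ((n : ℤ) - 1) * (t + 1) + 0 from by ring,
          hform (t + 1) 0 (by omega) (by omega),
          hform t ((n : ℤ) - 2) (by omega) (by omega)]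
        ring
      · exact ⟨t + 1, by rw [hform t ((n : ℤ) - 2) (by omega) (by omega)]; ring⟩
  have hshift : ∀ k : ℤ, phi n i (k + ((n : ℤ) - 1)) = phi n i k + (n : ℤ) := by
    intro k
    obtain ⟨t, r, hr0, hr1, hk⟩ := hrep k
    subst hk
    rw [show i + 2 + ((n : ℤ) - 1) * t + r + ((n : ℤ) - 1)
        = i + 2 + ((n : ℤ) - 1) * (t + 1) + r from by ring,
      hform (t + 1) r hr0 hr1, hform t r hr0 hr1]
    ring
  have hmono : ∀ k l : ℤ, k ≤ l → phi n i k + (l - k) ≤ phi n i l := by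
    intro k
    exact Int.le_induction (by omega)
      (fun l hl ih => by rcases hstep l with h | ⟨h, _⟩ <;> omega)
  have hne : ∀ k u : ℤ, phi n i k ≠ i + 1 + (n : ℤ) * u := by
    intro k u h
    obtain ⟨t, r, hr0, hr1, hk⟩ := hrep k
    subst hk
    rw [hform t r hr0 hr1] at h
    exact not_mul_btw (show (0 : ℤ) < (n : ℤ) by omega)
      (show (n : ℤ) * (u - t) = r + 1 by linear_combination -h) (by omega) (by omega)
  have hq1 : ∀ x t' : ℤ, x = i + (n : ℤ) * t' → a x (x + 2) = 1 := by
    intro x t' hx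
    rw [hqa x, hx]; exact (hqp t' i).trans hi
  refine ⟨hper, fun k l => a (phi n i k) (phi n i l), ?_, ?_⟩
  · -- the cut frieze
    refine ⟨fun k => f0 _, ?_, ?_, ?_, ?_, ?_, ?_, ?_⟩
    · -- row of 1s above
      intro k
      show a (phi n i k) (phi n i (k + 1)) = 1
      rcases hstep k with h | ⟨h, t, ht⟩
      · rw [h]; exact f1 _
      · rw [h]; exact hq1 _ t ht
    · -- row of 1s below
      intro k
      rw [hcast]
      show a (phi n i k) (phi n i (k + ((n : ℤ) - 1) - 1)) = 1
      rcases hstep (k + ((n : ℤ) - 1) - 1) with h | ⟨h, u, hu⟩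
      · rw [show k + ((n : ℤ) - 1) - 1 + 1 = k + ((n : ℤ) - 1) from by ring, hshift] at h
        have hv : phi n i (k + ((n : ℤ) - 1) - 1) = phi n i k + (n : ℤ) - 1 := by omega
        rw [hv]; exact flast _
      · rw [show k + ((n : ℤ) - 1) - 1 + 1 = k + ((n : ℤ) - 1) from by ring, hshift] at h
        have hv : phi n i (k + ((n : ℤ) - 1) - 1) = phi n i k + (n : ℤ) - 2 := by omega
        rw [hv, frieze_glide hF hn2 (phi n i k)]
        have e := hqa (phi n i k + (n : ℤ) - 2)
        rw [show phi n i k + (n : ℤ) - 2 + 2 = phi n i k + (n : ℤ) from by ring] at e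
        rw [e, show phi n i k + (n : ℤ) - 2 = i + (n : ℤ) * u from by linarith [hu, hv]]
        exact (hqp u i).trans hi
    · -- row of 0s below
      intro k
      rw [hcast]
      show a (phi n i k) (phi n i (k + ((n : ℤ) - 1))) = 0
      rw [hshift]; exact f4 _
    · -- positivity
      intro k l hx1 hx2
      rw [hcast] at hx2
      show 0 < a (phi n i k) (phi n i l)
      have hm1 := hmono k l (by omega)
      have hm2 := hmono l (k + ((n : ℤ) - 1)) (by omega)
      rw [hshift] at hm2
      exact fpos _ _ (by omega) (by omega)
    · -- diamond rule
      intro k l hx1 hx2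
      rw [hcast] at hx2
      show a (phi n i k) (phi n i l) * a (phi n i (k + 1)) (phi n i (l + 1))
          - a (phi n i k) (phi n i (l + 1)) * a (phi n i (k + 1)) (phi n i l) = 1
      have hm1 := hmono k l (by omega)
      have hm2 := hmono l (k + ((n : ℤ) - 1)) (by omega)
      rw [hshift] at hm2
      rcases hstep k with hk | ⟨hk, t, ht⟩ <;> rcases hstep l with hl | ⟨hl, u, hu⟩
      · rw [hk, hl]
        exact fdia (phi n i k) (phi n i l) (by omega) (by omega)
      · -- column skip
        rw [hk, hl]
        have hq1' : a (phi n i l) (phi n i l + 2) = 1 := hq1 _ u hu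
        have hrub : phi n i l ≤ phi n i k + (n : ℤ) - 2 := by
          by_contra hc
          have hv : phi n i l = phi n i k + (n : ℤ) - 1 := by omega
          exact hne (k + ((n : ℤ) - 1)) u (by rw [hshift]; linarith [hu, hv])
        have A1 := frieze_rec hF (phi n i l + 1) (phi n i k) (by omega) (by omega)
        have A2 := frieze_rec hF (phi n i l + 1) (phi n i k + 1) (by omega) (by omega)
        rw [show phi n i l + 1 + 1 = phi n i l + 2 from by ring,
            show phi n i l + 1 - 1 = phi n i l from by ring, hq1', one_mul] at A1 A2
        have D := fdia (phi n i k) (phi n i l) (by omega) (by omega)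
        linear_combination D + a (phi n i k) (phi n i l) * A2
          - a (phi n i k + 1) (phi n i l) * A1
      · -- row skip
        rw [hk, hl]
        have hq1' : a (phi n i k) (phi n i k + 2) = 1 := hq1 _ t ht
        have hrlb : phi n i k + 2 ≤ phi n i l := by
          rcases eq_or_lt_of_le (show phi n i k + 1 ≤ phi n i l by omega) with h | h
          · exact absurd (by rw [← h, ht]; ring : phi n i l = i + 1 + (n : ℤ) * t) (hne l t)
          · omega
        have A1 := frieze_rec' hF (phi n i k + 1) (phi n i l) (by omega) (by omega)
        have A2 := frieze_rec' hF (phi n i k + 1) (phi n i l + 1) (by omega) (by omega)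
        rw [show phi n i k + 1 - 1 = phi n i k from by ring,
            show phi n i k + 1 + 1 = phi n i k + 2 from by ring, hq1', one_mul] at A1 A2
        have D := fdia (phi n i k) (phi n i l) (by omega) (by omega)
        linear_combination D + a (phi n i k) (phi n i l) * A2
          - a (phi n i k) (phi n i l + 1) * A1
      · -- both skips: impossible
        exfalso
        exact not_mul_btw (show (0 : ℤ) < (n : ℤ) by omega)
          (show (n : ℤ) * (u - t) = phi n i l - phi n i k by linear_combination ht - hu)
          (by omega) (by omega)
    · -- zero below the band
      intro k l h
      have := hmono l k (le_of_lt h)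
      exact flow _ _ (by omega)
    · -- zero above the band
      intro k l h
      rw [hcast] at h
      have hv := hmono (k + ((n : ℤ) - 1)) l (by omega)
      rw [hshift] at hv
      exact fhigh _ _ (by omega)
  · -- quiddity of the cut frieze
    intro k
    show a (phi n i k) (phi n i (k + 2)) = q' k
    obtain ⟨t, r, hr0, hr1, hk⟩ := hrep k
    subst hk
    have e0 := hform t r hr0 hr1
    by_cases hA : r ≤ (n : ℤ) - 4
    · have e2 : phi n i (i + 2 + ((n : ℤ) - 1) * t + r + 2) = i + 2 + (n : ℤ) * t + (r + 2) := by
        rw [show i + 2 + ((n : ℤ) - 1) * t + r + 2 = i + 2 + ((n : ℤ) - 1) * t + (r + 2) from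
          by ring]
        exact hform t (r + 2) (by omega) (by omega)
      rw [e0, e2]
      have e3 := hqa (i + 2 + (n : ℤ) * t + r)
      rw [show i + 2 + (n : ℤ) * t + r + 2 = i + 2 + (n : ℤ) * t + (r + 2) from by ring] at e3
      rw [e3]
      have e4 : q (i + 2 + (n : ℤ) * t + r) = q (i + 2 + r) := by
        have h := hqp t (i + 2 + r)
        rw [show i + 2 + r + (n : ℤ) * t = i + 2 + (n : ℤ) * t + r from by ring] at h
        exact h
      have e5 : q' (i + 2 + ((n : ℤ) - 1) * t + r) = q' (i + 2 + r) := by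
        have h := hq'p t (i + 2 + r)
        rw [show i + 2 + r + ((n : ℤ) - 1) * t = i + 2 + ((n : ℤ) - 1) * t + r from by ring] at h
        exact h
      rw [e4, e5]
      exact (h2 (i + 2 + r) (by omega) (by omega)).symm
    · by_cases hB : r = (n : ℤ) - 3
      · subst hB
        have e2 : phi n i (i + 2 + ((n : ℤ) - 1) * t + ((n : ℤ) - 3) + 2)
            = i + 2 + (n : ℤ) * (t + 1) := by
          rw [show i + 2 + ((n : ℤ) - 1) * t + ((n : ℤ) - 3) + 2
              = i + 2 + ((n : ℤ) - 1) * (t + 1) + 0 from by ring,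
            hform (t + 1) 0 (by omega) (by omega)]
          ring
        rw [e0, e2, show i + 2 + (n : ℤ) * t + ((n : ℤ) - 3) = (i + (n : ℤ) * (t + 1)) - 1 from
            by ring, show i + 2 + (n : ℤ) * (t + 1) = (i + (n : ℤ) * (t + 1)) + 2 from by ring]
        generalize hs : i + (n : ℤ) * (t + 1) = s
        have hqs : q s = 1 := by rw [← hs]; exact (hqp (t + 1) i).trans hi
        have R := frieze_rec hF (s + 1) (s - 1) (by omega) (by omega)
        rw [show s + 1 + 1 = s + 2 from by ring, show s + 1 - 1 = s from by ring] at R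
        have hqa1 : a s (s + 2) = 1 := by rw [hqa s]; exact hqs
        have hones : a (s - 1) s = 1 := by
          have h := f1 (s - 1); rw [show s - 1 + 1 = s from by ring] at h; exact h
        have hqprev : a (s - 1) (s + 1) = q (s - 1) := by
          have h := hqa (s - 1); rw [show s - 1 + 2 = s + 1 from by ring] at h; exact h
        rw [hqa1, one_mul, hones, hqprev] at R
        have e5 : q' (i + 2 + ((n : ℤ) - 1) * t + ((n : ℤ) - 3)) = q' (i + (n : ℤ) - 1) := by
          have h := hq'p t (i + (n : ℤ) - 1)
          rw [show i + (n : ℤ) - 1 + ((n : ℤ) - 1) * t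
              = i + 2 + ((n : ℤ) - 1) * t + ((n : ℤ) - 3) from by ring] at h
          exact h
        have e6 : q (s - 1) = q (i + (n : ℤ) - 1) := by
          have h := hqp t (i + (n : ℤ) - 1)
          rw [show i + (n : ℤ) - 1 + (n : ℤ) * t = s - 1 from by rw [← hs]; ring] at h
          exact h
        rw [e5, h3]
        linarith [R, e6]
      · have hC : r = (n : ℤ) - 2 := by omega
        subst hC
        have e2 : phi n i (i + 2 + ((n : ℤ) - 1) * t + ((n : ℤ) - 2) + 2)
            = i + 2 + (n : ℤ) * (t + 1) + 1 := by
          rw [show i + 2 + ((n : ℤ) - 1) * t + ((n : ℤ) - 2) + 2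
              = i + 2 + ((n : ℤ) - 1) * (t + 1) + 1 from by ring]
          exact hform (t + 1) 1 (by omega) (by omega)
        rw [e0, e2, show i + 2 + (n : ℤ) * t + ((n : ℤ) - 2) = i + (n : ℤ) * (t + 1) from
            by ring, show i + 2 + (n : ℤ) * (t + 1) + 1 = (i + (n : ℤ) * (t + 1)) + 3 from
            by ring]
        generalize hs : i + (n : ℤ) * (t + 1) = s
        have hqs : q s = 1 := by rw [← hs]; exact (hqp (t + 1) i).trans hi
        have R := frieze_rec' hF (s + 1) (s + 3) (by omega) (by omega)
        rw [show s + 1 - 1 = s from by ring, show s + 1 + 1 = s + 2 from by ring] at R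
        have hqa1 : a s (s + 2) = 1 := by rw [hqa s]; exact hqs
        have h23 : a (s + 2) (s + 3) = 1 := by
          have h := f1 (s + 2); rw [show s + 2 + 1 = s + 3 from by ring] at h; exact h
        have h13 : a (s + 1) (s + 3) = q (s + 1) := by
          have h := hqa (s + 1); rw [show s + 1 + 2 = s + 3 from by ring] at h; exact h
        rw [hqa1, one_mul, h23, h13] at R
        have e5 : q' (i + 2 + ((n : ℤ) - 1) * t + ((n : ℤ) - 2)) = q' (i + 1) := by
          have h := hq'p (t + 1) (i + 1)
          rw [show i + 1 + ((n : ℤ) - 1) * (t + 1)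
              = i + 2 + ((n : ℤ) - 1) * t + ((n : ℤ) - 2) from by ring] at h
          exact h
        have e6 : q (s + 1) = q (i + 1) := by
          have h := hqp (t + 1) (i + 1)
          rw [show i + 1 + (n : ℤ) * (t + 1) = s + 1 from by rw [← hs]; ring] at h
          exact h
        rw [e5, h1]
        linarith [R, e6]
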